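/- Given five points p1,...,p5 in the complex projective plane such that no three of them are collinear, there exists a unique irreducible conic passing through all five points. -/

import Mathlib

open scoped LinearAlgebra.Projectivization
open MvPolynomial

/-- The vector space `ℂ³`. -/
abbrev V3 : Type := Fin 3 → ℂ

/-- The complex projective plane. -/
abbrev P2 := ℙ ℂ V3

/-- Three points of `ℙ²` are collinear if they lie on a common line. -/
def Coll (p q r : P2) : Prop :=
  ∃ f : Module.Dual ℂ V3, f ≠ 0 ∧ f p.rep = 0 ∧ f q.rep = 0 ∧ f r.rep = 0

/-- `f` defines a conic: a nonzero homogeneous polynomial of degree 2 in three variables. -/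
def IsConic (f : MvPolynomial (Fin 3) ℂ) : Prop :=
  f.IsHomogeneous 2 ∧ f ≠ 0

/-- The plane curve with (homogeneous) equation `f = 0` passes through the point `p ∈ ℙ²`. -/
def PassesThrough (f : MvPolynomial (Fin 3) ℂ) (p : P2) : Prop :=
  eval p.rep f = 0

/-! ### Auxiliary lemmas -/

lemma eval_sum_support' (p : MvPolynomial (Fin 3) ℂ) (x : V3) :
    eval x p = ∑ d ∈ p.support, coeff d p * (x 0 ^ d 0 * x 1 ^ d 1 * x 2 ^ d 2) := by
  conv_lhs => rw [p.as_sum]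
  rw [map_sum]
  refine Finset.sum_congr rfl fun d _ => ?_
  rw [eval_monomial]
  congr 1
  rw [Finsupp.prod_fintype _ _ (fun i => pow_zero (x i)), Fin.prod_univ_three]

lemma support_degree' {n : ℕ} {p : MvPolynomial (Fin 3) ℂ} (hp : p.IsHomogeneous n)
    {d : Fin 3 →₀ ℕ} (hd : d ∈ p.support) : d 0 + d 1 + d 2 = n := by
  have h1 : (Finsupp.weight 1) d = n := hp (mem_support_iff.mp hd)
  rw [show (1 : Fin 3 → ℕ) = fun _ => 1 from rfl, ← Finsupp.degree_eq_weight_one] at h1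
  rw [← h1, Finsupp.degree_apply]
  rw [Finset.sum_subset (Finset.subset_univ _) (fun i _ hi => Finsupp.notMem_support_iff.mp hi),
    Fin.sum_univ_three]

lemma deg1_add' {p : MvPolynomial (Fin 3) ℂ} (hp : p.IsHomogeneous 1) (x y : V3) :
    eval (x + y) p = eval x p + eval y p := by
  rw [eval_sum_support', eval_sum_support', eval_sum_support', ← Finset.sum_add_distrib]
  refine Finset.sum_congr rfl fun d hd => ?_
  have h := support_degree' hp hd
  simp only [Pi.add_apply]
  set a := d 0; set b := d 1; set c := d 2
  have hc : (a=1∧b=0∧c=0)∨(a=0∧b=1∧c=0)∨(a=0∧b=0∧c=1) := by omega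
  rcases hc with ⟨h1,h2,h3⟩|⟨h1,h2,h3⟩|⟨h1,h2,h3⟩ <;> rw [h1,h2,h3] <;> ring

lemma deg1_smul' {p : MvPolynomial (Fin 3) ℂ} (hp : p.IsHomogeneous 1) (s : ℂ) (x : V3) :
    eval (s • x) p = s * eval x p := by
  rw [eval_sum_support', eval_sum_support', Finset.mul_sum]
  refine Finset.sum_congr rfl fun d hd => ?_
  have h := support_degree' hp hd
  simp only [Pi.smul_apply, smul_eq_mul]
  set a := d 0; set b := d 1; set c := d 2
  have hc : (a=1∧b=0∧c=0)∨(a=0∧b=1∧c=0)∨(a=0∧b=0∧c=1) := by omega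
  rcases hc with ⟨h1,h2,h3⟩|⟨h1,h2,h3⟩|⟨h1,h2,h3⟩ <;> rw [h1,h2,h3] <;> ring

lemma exists_dual_of_deg1 {p : MvPolynomial (Fin 3) ℂ} (hp : p.IsHomogeneous 1) :
    ∃ φ : Module.Dual ℂ V3, ∀ x, φ x = eval x p := by
  refine ⟨⟨⟨fun x => eval x p, deg1_add' hp⟩, fun s x => ?_⟩, fun x => rfl⟩
  simpa using deg1_smul' hp s x

lemma quadeval3 {p : MvPolynomial (Fin 3) ℂ} (hp : p.IsHomogeneous 2) (x y z : V3) (a b c : ℂ) :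
    eval (a • x + b • y + c • z) p
      = a^2 * eval x p + b^2 * eval y p + c^2 * eval z p
      + a*b*(eval (x+y) p - eval x p - eval y p)
      + a*c*(eval (x+z) p - eval x p - eval z p)
      + b*c*(eval (y+z) p - eval y p - eval z p) := by
  simp only [eval_sum_support', Finset.mul_sum, ← Finset.sum_sub_distrib, ← Finset.sum_add_distrib]
  refine Finset.sum_congr rfl fun d hd => ?_
  have h := support_degree' hp hd
  simp only [Pi.add_apply, Pi.smul_apply, smul_eq_mul]
  set n0 := d 0; set n1 := d 1; set n2 := d 2
  have hc : (n0=2∧n1=0∧n2=0)∨(n0=0∧n1=2∧n2=0)∨(n0=0∧n1=0∧n2=2)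
      ∨(n0=1∧n1=1∧n2=0)∨(n0=1∧n1=0∧n2=1)∨(n0=0∧n1=1∧n2=1) := by omega
  rcases hc with ⟨h1,h2,h3⟩|⟨h1,h2,h3⟩|⟨h1,h2,h3⟩|⟨h1,h2,h3⟩|⟨h1,h2,h3⟩|⟨h1,h2,h3⟩ <;>
    rw [h1,h2,h3] <;> ring

lemma finrank_V3 : Module.finrank ℂ V3 = 3 := by
  simp [Module.finrank_pi]

lemma exists_dual_triple (u v w : V3) (h : ¬ LinearIndependent ℂ ![u, v, w]) :
    ∃ φ : Module.Dual ℂ V3, φ ≠ 0 ∧ φ u = 0 ∧ φ v = 0 ∧ φ w = 0 := by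
  have hlt : Submodule.span ℂ (Set.range ![u, v, w]) ≠ ⊤ := by
    intro htop
    apply h
    rw [linearIndependent_iff_card_eq_finrank_span]
    rw [Set.finrank, htop, finrank_top, finrank_V3]
    simp
  obtain ⟨x, hx⟩ : ∃ x : V3, x ∉ Submodule.span ℂ (Set.range ![u, v, w]) := by
    by_contra hc
    push_neg at hc
    exact hlt (Submodule.eq_top_iff'.mpr hc)
  set S := Submodule.span ℂ (Set.range ![u, v, w])
  have hmk : S.mkQ x ≠ 0 := by
    simpa [Submodule.Quotient.mk_eq_zero] using hx
  obtain ⟨ψ, hψ⟩ : ∃ ψ : Module.Dual ℂ (V3 ⧸ S), ψ (S.mkQ x) ≠ 0 := by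
    by_contra hc
    push_neg at hc
    exact hmk ((Module.forall_dual_apply_eq_zero_iff ℂ _).mp hc)
  refine ⟨ψ.comp S.mkQ, ?_, ?_, ?_, ?_⟩
  · intro h0
    exact hψ (by simpa using LinearMap.congr_fun h0 x)
  · have : S.mkQ u = 0 := (Submodule.Quotient.mk_eq_zero S).mpr
      (Submodule.subset_span ⟨0, rfl⟩)
    simp [this]
  · have : S.mkQ v = 0 := (Submodule.Quotient.mk_eq_zero S).mpr
      (Submodule.subset_span ⟨1, rfl⟩)
    simp [this]
  · have : S.mkQ w = 0 := (Submodule.Quotient.mk_eq_zero S).mpr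
      (Submodule.subset_span ⟨2, rfl⟩)
    simp [this]

/-- The key geometric lemma: a conic through five points in general position and through
the extra point `v 0 + v 1` must be the zero polynomial. -/
lemma key_lemma {v : Fin 5 → V3}
    (hd : ∀ i j k : Fin 5, i ≠ j → i ≠ k → j ≠ k →
      ¬∃ φ : Module.Dual ℂ V3, φ ≠ 0 ∧ φ (v i) = 0 ∧ φ (v j) = 0 ∧ φ (v k) = 0)
    {q : MvPolynomial (Fin 3) ℂ} (hq2 : q.IsHomogeneous 2)
    (hq : ∀ i, eval (v i) q = 0) (hq01 : eval (v 0 + v 1) q = 0) : q = 0 := by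
  have indep : LinearIndependent ℂ ![v 0, v 1, v 2] := by
    by_contra hni
    exact hd 0 1 2 (by decide) (by decide) (by decide) (exists_dual_triple _ _ _ hni)
  let bb : Module.Basis (Fin 3) ℂ V3 :=
    basisOfLinearIndependentOfCardEqFinrank indep (by simp [finrank_V3])
  have hbb : ∀ i, bb i = ![v 0, v 1, v 2] i := fun i => by
    rw [coe_basisOfLinearIndependentOfCardEqFinrank]
  have hb0 : bb 0 = v 0 := hbb 0
  have hb1 : bb 1 = v 1 := hbb 1
  have hb2 : bb 2 = v 2 := hbb 2
  set β02 := eval (v 0 + v 2) q with hβ02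
  set β12 := eval (v 1 + v 2) q with hβ12
  set m : Module.Dual ℂ V3 := β02 • bb.coord 0 + β12 • bb.coord 1 with hm
  set κ : Module.Dual ℂ V3 := bb.coord 2 with hκ
  have hrepr : ∀ i x, bb.coord i x = bb.repr x i := fun i x => rfl
  have hreprbasis : ∀ i j, bb.repr (bb i) j = if i = j then 1 else 0 := by
    intro i j; rw [bb.repr_self]; exact Finsupp.single_apply
  have hfact : ∀ x : V3, eval x q = κ x * m x := by
    intro x
    have hx : x = (bb.repr x 0) • (v 0) + (bb.repr x 1) • (v 1) + (bb.repr x 2) • (v 2) := by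
      conv_lhs => rw [← bb.sum_repr x]
      rw [Fin.sum_univ_three, hb0, hb1, hb2]
    conv_lhs => rw [hx]
    rw [quadeval3 hq2]
    rw [hq 0, hq 1, hq 2, hq01]
    simp only [hm, hκ, LinearMap.add_apply, LinearMap.smul_apply, hrepr, smul_eq_mul,
      ← hβ02, ← hβ12]
    ring
  have hκ0 : κ (v 0) = 0 := by rw [hκ, hrepr, ← hb0, hreprbasis, if_neg (by decide)]
  have hκ1 : κ (v 1) = 0 := by rw [hκ, hrepr, ← hb1, hreprbasis, if_neg (by decide)]
  have hκ2 : κ (v 2) = 1 := by rw [hκ, hrepr, ← hb2, hreprbasis, if_pos rfl]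
  have hκne : κ ≠ 0 := fun h0 => by rw [h0] at hκ2; simp at hκ2
  have hm2 : m (v 2) = 0 := by
    simp only [hm, LinearMap.add_apply, LinearMap.smul_apply, hrepr, smul_eq_mul, ← hb2,
      hreprbasis]
    rw [if_neg (by decide), if_neg (by decide)]
    ring
  have hκ3 : κ (v 3) ≠ 0 := by
    intro h0
    exact hd 0 1 3 (by decide) (by decide) (by decide) ⟨κ, hκne, hκ0, hκ1, h0⟩
  have hκ4 : κ (v 4) ≠ 0 := by
    intro h0
    exact hd 0 1 4 (by decide) (by decide) (by decide) ⟨κ, hκne, hκ0, hκ1, h0⟩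
  have hm3 : m (v 3) = 0 := by
    have := hq 3; rw [hfact] at this
    exact (mul_eq_zero.mp this).resolve_left hκ3
  have hm4 : m (v 4) = 0 := by
    have := hq 4; rw [hfact] at this
    exact (mul_eq_zero.mp this).resolve_left hκ4
  have hmz : m = 0 := by
    by_contra hmne
    exact hd 2 3 4 (by decide) (by decide) (by decide) ⟨m, hmne, hm2, hm3, hm4⟩
  apply MvPolynomial.funext
  intro x
  rw [hfact, hmz]
  simp

/-! ### Degree bookkeeping for factors -/

lemma degree_add' (a b : Fin 3 →₀ ℕ) : (a + b).degree = a.degree + b.degree := by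
  simp [Finsupp.degree_eq_weight_one, map_add]

lemma tdeg_sup (g : MvPolynomial (Fin 3) ℂ) : g.totalDegree = g.support.sup Finsupp.degree := rfl

lemma degree_le_tdeg {g : MvPolynomial (Fin 3) ℂ} {d : Fin 3 →₀ ℕ} (hd : d ∈ g.support) :
    d.degree ≤ g.totalDegree := by
  rw [tdeg_sup]; exact Finset.le_sup hd

lemma coeff_zero_of_lt {g : MvPolynomial (Fin 3) ℂ} {d : Fin 3 →₀ ℕ}
    (hd : g.totalDegree < d.degree) : coeff d g = 0 :=
  coeff_eq_zero_of_totalDegree_lt hd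

lemma hc_top_ne (g : MvPolynomial (Fin 3) ℂ) (hg : g ≠ 0) :
    homogeneousComponent g.totalDegree g ≠ 0 := by
  obtain ⟨d, hd, he⟩ := Finset.exists_mem_eq_sup g.support (support_nonempty.mpr hg) Finsupp.degree
  intro h0
  have hc := coeff_homogeneousComponent g.totalDegree g d
  rw [h0, if_pos (by rw [tdeg_sup, he])] at hc
  exact (mem_support_iff.mp hd) hc.symm

lemma hc_top_mul (g h : MvPolynomial (Fin 3) ℂ) :
    homogeneousComponent (g.totalDegree + h.totalDegree) (g * h)
      = homogeneousComponent g.totalDegree g * homogeneousComponent h.totalDegree h := by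
  classical
  ext d
  rw [coeff_homogeneousComponent, coeff_mul, coeff_mul]
  by_cases hd : d.degree = g.totalDegree + h.totalDegree
  · rw [if_pos hd]
    refine Finset.sum_congr rfl fun x hx => ?_
    have hxx : x.1 + x.2 = d := Finset.HasAntidiagonal.mem_antidiagonal.mp hx
    have hdeg : x.1.degree + x.2.degree = d.degree := by rw [← hxx, degree_add']
    rw [coeff_homogeneousComponent, coeff_homogeneousComponent]
    by_cases h1 : x.1.degree = g.totalDegree
    · have h2 : x.2.degree = h.totalDegree := by omega
      rw [if_pos h1, if_pos h2]
    · rw [if_neg h1]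
      rcases lt_or_gt_of_ne h1 with hlt | hgt
      · have h2 : h.totalDegree < x.2.degree := by omega
        rw [coeff_zero_of_lt h2, mul_zero, zero_mul]
      · rw [coeff_zero_of_lt hgt, zero_mul, zero_mul]
  · rw [if_neg hd, eq_comm]
    apply Finset.sum_eq_zero
    intro x hx
    have hxx : x.1 + x.2 = d := Finset.HasAntidiagonal.mem_antidiagonal.mp hx
    have hdeg : x.1.degree + x.2.degree = d.degree := by rw [← hxx, degree_add']
    rw [coeff_homogeneousComponent, coeff_homogeneousComponent]
    by_cases h1 : x.1.degree = g.totalDegree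
    · rw [if_neg (show x.2.degree ≠ h.totalDegree by omega), mul_zero]
    · rw [if_neg h1, zero_mul]

lemma eq_C_of_tdeg0 {g : MvPolynomial (Fin 3) ℂ} (h : g.totalDegree = 0) :
    g = C (coeff 0 g) := by
  have hs : ∀ d ∈ g.support, d = 0 := by
    intro d hd
    have h1 := degree_le_tdeg hd
    rw [h] at h1
    exact (Finsupp.degree_eq_zero_iff d).mp (Nat.le_zero.mp h1)
  ext d
  rw [coeff_C]
  by_cases hd : d = 0
  · subst hd; rw [if_pos rfl]
  · rw [if_neg (fun hh => hd hh.symm)]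
    by_contra hne
    exact hd (hs d (mem_support_iff.mpr hne))

lemma pigeon5 : ∀ b : Fin 5 → Bool, ∃ i j k : Fin 5,
    i ≠ j ∧ i ≠ k ∧ j ≠ k ∧ b i = b j ∧ b i = b k := by decide

/-- Given five points of `ℙ²` no three of which are collinear, there is a unique
irreducible conic through all five (unique in the sense that any other such conic is a
nonzero scalar multiple, i.e. defines the same curve). -/
theorem stmt1 (p : Fin 5 → P2)
    (h : ∀ i j k : Fin 5, i ≠ j → i ≠ k → j ≠ k → ¬ Coll (p i) (p j) (p k)) :
    ∃ f : MvPolynomial (Fin 3) ℂ,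
      (IsConic f ∧ Irreducible f ∧ ∀ i, PassesThrough f (p i)) ∧
      ∀ g : MvPolynomial (Fin 3) ℂ,
        (IsConic g ∧ Irreducible g ∧ ∀ i, PassesThrough g (p i)) →
        ∃ c : ℂ, c ≠ 0 ∧ g = c • f := by
  classical
  set v : Fin 5 → V3 := fun i => (p i).rep with hv
  have hd : ∀ i j k : Fin 5, i ≠ j → i ≠ k → j ≠ k →
      ¬∃ φ : Module.Dual ℂ V3, φ ≠ 0 ∧ φ (v i) = 0 ∧ φ (v j) = 0 ∧ φ (v k) = 0 := by
    intro i j k hij hik hjk hex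
    exact h i j k hij hik hjk hex
  -- existence of a nonzero coefficient vector
  obtain ⟨t, ht0, htk⟩ : ∃ t : Fin 6 → ℂ, t ≠ 0 ∧ ∀ i : Fin 5,
      t 0 * (v i 0 * v i 0) + t 1 * (v i 1 * v i 1) + t 2 * (v i 2 * v i 2)
      + t 3 * (v i 0 * v i 1) + t 4 * (v i 0 * v i 2) + t 5 * (v i 1 * v i 2) = 0 := by
    set M : Matrix (Fin 5) (Fin 6) ℂ := fun i =>
      ![v i 0 * v i 0, v i 1 * v i 1, v i 2 * v i 2,
        v i 0 * v i 1, v i 0 * v i 2, v i 1 * v i 2] with hM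
    have hni : ¬ Function.Injective M.mulVecLin := by
      intro hinj
      have hle := LinearMap.finrank_le_finrank_of_injective hinj
      simp [Module.finrank_pi] at hle
    rw [← LinearMap.ker_eq_bot] at hni
    obtain ⟨t, htk, ht0⟩ := (Submodule.ne_bot_iff _).mp hni
    refine ⟨t, ht0, fun i => ?_⟩
    have h2 : M.mulVec t i = 0 := by
      rw [show M.mulVec t = 0 from htk]
      rfl
    rw [Matrix.mulVec, dotProduct, Fin.sum_univ_six] at h2
    have c0 : M i 0 = v i 0 * v i 0 := rfl
    have c1 : M i 1 = v i 1 * v i 1 := rfl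
    have c2 : M i 2 = v i 2 * v i 2 := rfl
    have c3 : M i 3 = v i 0 * v i 1 := rfl
    have c4 : M i 4 = v i 0 * v i 2 := rfl
    have c5 : M i 5 = v i 1 * v i 2 := rfl
    rw [c0, c1, c2, c3, c4, c5] at h2
    linear_combination h2
  set f : MvPolynomial (Fin 3) ℂ :=
    C (t 0) * (X 0 * X 0) + C (t 1) * (X 1 * X 1) + C (t 2) * (X 2 * X 2)
    + C (t 3) * (X 0 * X 1) + C (t 4) * (X 0 * X 2) + C (t 5) * (X 1 * X 2) with hf
  have hfhom : f.IsHomogeneous 2 := by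
    rw [hf]
    repeat' apply MvPolynomial.IsHomogeneous.add
    all_goals exact ((isHomogeneous_X ℂ _).mul (isHomogeneous_X ℂ _)).C_mul _
  have heval : ∀ x : V3, eval x f
      = t 0 * (x 0 * x 0) + t 1 * (x 1 * x 1) + t 2 * (x 2 * x 2)
      + t 3 * (x 0 * x 1) + t 4 * (x 0 * x 2) + t 5 * (x 1 * x 2) := by
    intro x
    simp [hf]
  have hfpass : ∀ i : Fin 5, eval (v i) f = 0 := fun i => by rw [heval]; exact htk i
  have hfne : f ≠ 0 := by
    intro h0
    apply ht0
    have hz : ∀ x : V3,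
        t 0 * (x 0 * x 0) + t 1 * (x 1 * x 1) + t 2 * (x 2 * x 2)
        + t 3 * (x 0 * x 1) + t 4 * (x 0 * x 2) + t 5 * (x 1 * x 2) = 0 := by
      intro x
      rw [← heval x, h0, map_zero]
    have e0 := hz ![1,0,0]
    have e1 := hz ![0,1,0]
    have e2 := hz ![0,0,1]
    simp at e0 e1 e2
    have e3 := hz ![1,1,0]
    have e4 := hz ![1,0,1]
    have e5 := hz ![0,1,1]
    simp [e0, e1, e2] at e3 e4 e5
    funext j
    fin_cases j <;> simp [e0, e1, e2, e3, e4, e5]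
  -- the product of two linear functionals cannot vanish at all five points
  have no_split : ∀ φG φH : Module.Dual ℂ V3, φG ≠ 0 → φH ≠ 0 →
      (∀ i : Fin 5, φG (v i) * φH (v i) = 0) → False := by
    intro φG φH hGne hHne hvan
    set b : Fin 5 → Bool := fun i => decide (φG (v i) = 0) with hb
    obtain ⟨i, j, k, hij, hik, hjk, hbij, hbik⟩ := pigeon5 b
    by_cases hbi : φG (v i) = 0
    · have hbj : φG (v j) = 0 := by
        have : b j = true := by rw [← hbij, hb]; simp [hbi]
        simpa [hb] using this
      have hbk : φG (v k) = 0 := by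
        have : b k = true := by rw [← hbik, hb]; simp [hbi]
        simpa [hb] using this
      exact hd i j k hij hik hjk ⟨φG, hGne, hbi, hbj, hbk⟩
    · have hbj : ¬ φG (v j) = 0 := by
        have : b j = false := by rw [← hbij, hb]; simp [hbi]
        simpa [hb] using this
      have hbk : ¬ φG (v k) = 0 := by
        have : b k = false := by rw [← hbik, hb]; simp [hbi]
        simpa [hb] using this
      refine hd i j k hij hik hjk ⟨φH, hHne, ?_, ?_, ?_⟩
      · exact (mul_eq_zero.mp (hvan i)).resolve_left hbi
      · exact (mul_eq_zero.mp (hvan j)).resolve_left hbj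
      · exact (mul_eq_zero.mp (hvan k)).resolve_left hbk
  have hfirr : Irreducible f := by
    constructor
    · intro hu
      obtain ⟨g, hg⟩ := isUnit_iff_exists_inv.mp hu
      have h1 := congrArg (eval (0 : V3)) hg
      rw [map_mul, map_one] at h1
      have h00 : eval (0 : V3) f = 0 := by
        rw [heval]
        norm_num
      rw [h00, zero_mul] at h1
      exact zero_ne_one h1
    · intro g g' hsplit
      by_contra hcon
      push_neg at hcon
      obtain ⟨hgu, hgu'⟩ := hcon
      have hgne : g ≠ 0 := by
        rintro rfl
        rw [zero_mul] at hsplit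
        exact hfne hsplit
      have hgne' : g' ≠ 0 := by
        rintro rfl
        rw [mul_zero] at hsplit
        exact hfne hsplit
      have htd1 : 1 ≤ g.totalDegree := by
        by_contra hlt
        push_neg at hlt
        have h0 : g.totalDegree = 0 := by omega
        have hC := eq_C_of_tdeg0 h0
        apply hgu
        rw [hC]
        refine IsUnit.map _ (isUnit_iff_ne_zero.mpr ?_)
        intro hc0
        apply hgne
        rw [hC, hc0, map_zero]
      have htd1' : 1 ≤ g'.totalDegree := by
        by_contra hlt
        push_neg at hlt
        have h0 : g'.totalDegree = 0 := by omega
        have hC := eq_C_of_tdeg0 h0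
        apply hgu'
        rw [hC]
        refine IsUnit.map _ (isUnit_iff_ne_zero.mpr ?_)
        intro hc0
        apply hgne'
        rw [hC, hc0, map_zero]
      have hfd : f.totalDegree = 2 := hfhom.totalDegree hfne
      have htdle : g.totalDegree + g'.totalDegree ≤ 2 := by
        by_contra hgt
        push_neg at hgt
        have hz : homogeneousComponent (g.totalDegree + g'.totalDegree) (g * g') = 0 := by
          apply homogeneousComponent_eq_zero
          rw [← hsplit, hfd]
          exact hgt
        rw [hc_top_mul] at hz
        exact mul_ne_zero (hc_top_ne g hgne) (hc_top_ne g' hgne') hz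
      have hdg : g.totalDegree = 1 := by omega
      have hdg' : g'.totalDegree = 1 := by omega
      set G := homogeneousComponent 1 g with hG
      set G' := homogeneousComponent 1 g' with hG'
      have hGhom : G.IsHomogeneous 1 := homogeneousComponent_isHomogeneous 1 g
      have hGhom' : G'.IsHomogeneous 1 := homogeneousComponent_isHomogeneous 1 g'
      have hfGG : f = G * G' := by
        have h2 : homogeneousComponent 2 f = f :=  by
          rw [homogeneousComponent_of_mem hfhom, if_pos rfl]
        calc f = homogeneousComponent 2 f := h2.symm
        _ = homogeneousComponent (g.totalDegree + g'.totalDegree) (g * g') := by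
              rw [hsplit, hdg, hdg']
        _ = G * G' := by rw [hc_top_mul, hdg, hdg']
      have hGne : G ≠ 0 := by
        intro h0
        rw [hfGG, h0, zero_mul] at hfne
        exact hfne rfl
      have hGne' : G' ≠ 0 := by
        intro h0
        rw [hfGG, h0, mul_zero] at hfne
        exact hfne rfl
      obtain ⟨φG, hφG⟩ := exists_dual_of_deg1 hGhom
      obtain ⟨φG', hφG'⟩ := exists_dual_of_deg1 hGhom'
      have hφGne : φG ≠ 0 := by
        intro h0
        apply hGne
        apply MvPolynomial.funext
        intro x
        rw [← hφG x, h0]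
        simp
      have hφGne' : φG' ≠ 0 := by
        intro h0
        apply hGne'
        apply MvPolynomial.funext
        intro x
        rw [← hφG' x, h0]
        simp
      refine no_split φG φG' hφGne hφGne' fun i => ?_
      rw [hφG, hφG', ← map_mul, ← hfGG]
      exact hfpass i
  refine ⟨f, ⟨⟨hfhom, hfne⟩, hfirr, fun i => hfpass i⟩, ?_⟩
  rintro g ⟨⟨hghom, hgne⟩, -, hgpass⟩
  have hgpass' : ∀ i : Fin 5, eval (v i) g = 0 := fun i => hgpass i
  set w : V3 := v 0 + v 1 with hw
  by_cases hfw : eval w f = 0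
  · exact absurd (key_lemma hd hfhom hfpass hfw) hfne
  · set q : MvPolynomial (Fin 3) ℂ := (eval w g) • f - (eval w f) • g with hq
    have hqhom : q.IsHomogeneous 2 := by
      rw [hq, smul_eq_C_mul, smul_eq_C_mul]
      exact (hfhom.C_mul _).sub (hghom.C_mul _)
    have hqpass : ∀ i : Fin 5, eval (v i) q = 0 := by
      intro i
      rw [hq, map_sub, smul_eval, smul_eval, hfpass i, hgpass' i]
      ring
    have hqw : eval w q = 0 := by
      rw [hq, map_sub, smul_eval, smul_eval]
      ring
    have hq0 : q = 0 := key_lemma hd hqhom hqpass hqw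
    have heq : (eval w g) • f = (eval w f) • g := by
      rwa [hq, sub_eq_zero] at hq0
    refine ⟨(eval w f)⁻¹ * eval w g, ?_, ?_⟩
    · intro hc0
      apply hgne
      have : g = ((eval w f)⁻¹ * eval w g) • f := by
        rw [mul_smul, heq, inv_smul_smul₀ hfw]
      rw [this, hc0, zero_smul]
    · rw [mul_smul, heq, inv_smul_smul₀ hfw]
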